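/- Let A be an n×n matrix over a commutative ring with n ≥ 4, and define σ_t(A) = (−1)^t·(coefficient of λ^{n−t} in det(λI−A)). Then σ₂(A²) = σ₂(A)² − 2σ₃(A)tr(A) + 2σ₄(A). -/

import Mathlib

noncomputable def sigmaCoeff {R : Type*} [CommRing R] {n : ℕ} (t : ℕ)
    (M : Matrix (Fin n) (Fin n) R) : R :=
  (-1 : R) ^ t * M.charpoly.coeff (n - t)

section helpers

open Polynomial Matrix

variable {R : Type*} [CommRing R] {n : ℕ}

lemma coeff_comp_neg_X' (p : R[X]) (j : ℕ) :
    (p.comp (-X)).coeff j = (-1) ^ j * p.coeff j := by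
  induction p using Polynomial.induction_on' with
  | add p q hp hq => simp [add_comp, hp, hq, mul_add]
  | monomial k b =>
    rw [monomial_comp, neg_pow, ← C_1, ← C_neg, ← C_pow, ← mul_assoc, ← C_mul, coeff_C_mul,
      coeff_X_pow, coeff_monomial]
    by_cases h : j = k
    · subst h; simp [mul_comm]
    · simp [h, Ne.symm h]

lemma charmatrix_neg' (A : Matrix (Fin n) (Fin n) R) :
    charmatrix (-A) = Matrix.scalar (Fin n) X + (C : R →+* R[X]).mapMatrix A := by
  rw [charmatrix, map_neg, sub_neg_eq_add]

lemma key_matrix (A : Matrix (Fin n) (Fin n) R) :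
    (charmatrix (A * A)).map (Polynomial.expand R 2) =
      charmatrix A * charmatrix (-A) := by
  set B : Matrix (Fin n) (Fin n) R[X] := (C : R →+* R[X]).mapMatrix A with hBdef
  have hB : Matrix.scalar (Fin n) X * B = B * Matrix.scalar (Fin n) X :=
    (Matrix.scalar_commute X (fun r' => Commute.all X r') B).eq
  have hprod : charmatrix A * charmatrix (-A)
      = Matrix.scalar (Fin n) (X * X) - (C : R →+* R[X]).mapMatrix (A * A) := by
    rw [charmatrix_neg', charmatrix, ← hBdef, sub_mul, mul_add, mul_add, hB,
      map_mul (Matrix.scalar (Fin n)),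
      show (C : R →+* R[X]).mapMatrix (A * A) = B * B from map_mul _ _ _]
    abel
  rw [hprod, charmatrix]
  apply Matrix.ext
  intro i j
  rw [Matrix.map_apply, Matrix.sub_apply, Matrix.sub_apply, map_sub, Matrix.scalar_apply,
    Matrix.scalar_apply, RingHom.mapMatrix_apply, Matrix.map_apply, expand_C]
  by_cases h : i = j
  · subst h
    rw [Matrix.diagonal_apply_eq, Matrix.diagonal_apply_eq, expand_X, sq]
  · rw [Matrix.diagonal_apply_ne _ h, Matrix.diagonal_apply_ne _ h, map_zero]

lemma key_poly (A : Matrix (Fin n) (Fin n) R) :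
    Polynomial.expand R 2 ((A * A).charpoly) = A.charpoly * (-A).charpoly := by
  rw [Matrix.charpoly, Matrix.charpoly, Matrix.charpoly, ← Matrix.det_mul, ← key_matrix,
    ← AlgHom.mapMatrix_apply, ← AlgHom.map_det]

lemma charpoly_comp_neg_X (A : Matrix (Fin n) (Fin n) R) :
    A.charpoly.comp (-X) = (-1 : R[X]) ^ n * (-A).charpoly := by
  have hmap : (charmatrix A).map (Polynomial.eval₂RingHom (C : R →+* R[X]) (-X)) =
      -(charmatrix (-A)) := by
    apply Matrix.ext
    intro i j
    rw [Matrix.map_apply, charmatrix_apply, Matrix.neg_apply, charmatrix_apply]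
    by_cases h : i = j
    · subst h
      simp [Matrix.diagonal_apply_eq, map_sub, neg_sub]
      ring
    · simp [Matrix.diagonal_apply_ne _ h, map_sub]
  have : A.charpoly.comp (-X) =
      ((charmatrix A).map (Polynomial.eval₂RingHom (C : R →+* R[X]) (-X))).det := by
    rw [Matrix.charpoly, ← RingHom.mapMatrix_apply, ← RingHom.map_det]
    rfl
  rw [this, hmap, Matrix.det_neg, Matrix.charpoly]
  simp

lemma charpoly_neg_coeff (A : Matrix (Fin n) (Fin n) R) (j : ℕ) :
    (-A).charpoly.coeff j = (-1) ^ (n + j) * A.charpoly.coeff j := by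
  have hsq : ((-1 : R)) ^ n * (-1) ^ n = 1 := by
    rw [← pow_add]; exact Even.neg_one_pow ⟨n, rfl⟩
  have h : (-1 : R) ^ j * A.charpoly.coeff j = (-1) ^ n * (-A).charpoly.coeff j := by
    have h0 := congrArg (fun p => Polynomial.coeff p j) (charpoly_comp_neg_X A)
    have hC : (C ((-1 : R) ^ n) : R[X]) = (-1) ^ n := by rw [C_pow, map_neg, C_1]
    rw [coeff_comp_neg_X', ← hC, coeff_C_mul] at h0
    exact h0
  calc (-A).charpoly.coeff j
      = (-1) ^ n * ((-1) ^ n * (-A).charpoly.coeff j) := by rw [← mul_assoc, hsq, one_mul]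
    _ = (-1) ^ n * ((-1) ^ j * A.charpoly.coeff j) := by rw [← h]
    _ = (-1) ^ (n + j) * A.charpoly.coeff j := by rw [pow_add, mul_assoc]

end helpers

open Polynomial Matrix in
theorem sigma2_sq {R : Type*} [CommRing R] {n : ℕ} (hn : 4 ≤ n)
    (A : Matrix (Fin n) (Fin n) R) :
    sigmaCoeff 2 (A * A) =
      (sigmaCoeff 2 A) ^ 2 - 2 * sigmaCoeff 3 A * A.trace + 2 * sigmaCoeff 4 A := by
  nontriviality R
  obtain ⟨m, rfl⟩ : ∃ m, n = m + 4 := ⟨n - 4, by omega⟩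
  set p := A.charpoly with hp
  set q := (-A).charpoly with hq
  have hpd : p.natDegree = m + 4 := by rw [hp]; simp
  have hqd : q.natDegree = m + 4 := by rw [hq]; simp
  have hpm : p.coeff (m + 4) = 1 := by
    have := A.charpoly_monic.coeff_natDegree; rwa [hpd] at this
  have hqm : q.coeff (m + 4) = 1 := by
    have := (-A).charpoly_monic.coeff_natDegree; rwa [hqd] at this
  have hP : (A * A).charpoly.coeff (m + 2) = (p * q).coeff (2 * (m + 2)) := by
    have h0 := congrArg (fun f => Polynomial.coeff f (2 * (m + 2))) (key_poly A)
    rwa [Polynomial.coeff_expand_mul' (by norm_num)] at h0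
  have hsum : (p * q).coeff (2 * (m + 2)) =
      ∑ k ∈ Finset.range 5, p.coeff (m + k) * q.coeff (2 * (m + 2) - (m + k)) := by
    have hsub : (Finset.range 5).image (fun k => m + k) ⊆ Finset.range ((2 * (m + 2)).succ) := by
      intro x hx
      simp only [Finset.mem_image, Finset.mem_range] at hx ⊢
      omega
    have hzero : ∀ x ∈ Finset.range ((2 * (m + 2)).succ),
        x ∉ (Finset.range 5).image (fun k => m + k) →
        p.coeff x * q.coeff (2 * (m + 2) - x) = 0 := by
      intro x hx hnx
      simp only [Finset.mem_image, Finset.mem_range] at hx hnx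
      push_neg at hnx
      by_cases hlt : x < m
      · rw [Polynomial.coeff_eq_zero_of_natDegree_lt
          (by omega : q.natDegree < 2 * (m + 2) - x), mul_zero]
      · have hxgt : m + 4 < x := by
          rcases Nat.lt_or_ge (m + 4) x with h | h
          · exact h
          · exfalso; exact hnx (x - m) (by omega) (by omega)
        rw [Polynomial.coeff_eq_zero_of_natDegree_lt (by omega : p.natDegree < x), zero_mul]
    have hinj : ∀ a ∈ Finset.range 5, ∀ b ∈ Finset.range 5,
        m + a = m + b → a = b := fun a _ b _ h => by omega
    rw [Polynomial.coeff_mul, Finset.Nat.sum_antidiagonal_eq_sum_range_succ_mk]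
    have hfun : ∀ k, p.coeff (k, 2 * (m + 2) - k).1 * q.coeff (k, 2 * (m + 2) - k).2
        = p.coeff k * q.coeff (2 * (m + 2) - k) := fun k => rfl
    simp only [hfun]
    rw [← Finset.sum_subset hsub hzero, Finset.sum_image hinj]
  have e0 : 2 * (m + 2) - (m + 0) = m + 4 := by omega
  have e1 : 2 * (m + 2) - (m + 1) = m + 3 := by omega
  have e2 : 2 * (m + 2) - (m + 2) = m + 2 := by omega
  have e3 : 2 * (m + 2) - (m + 3) = m + 1 := by omega
  have e4 : 2 * (m + 2) - (m + 4) = m := by omega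
  rw [Finset.sum_range_succ, Finset.sum_range_succ, Finset.sum_range_succ,
    Finset.sum_range_succ, Finset.sum_range_succ, Finset.sum_range_zero, e0, e1, e2, e3, e4]
      at hsum
  have hq0 : q.coeff m = (-1 : R) ^ (m + 4 + m) * p.coeff m := charpoly_neg_coeff A m
  have hq1 : q.coeff (m + 1) = (-1 : R) ^ (m + 4 + (m + 1)) * p.coeff (m + 1) :=
    charpoly_neg_coeff A (m + 1)
  have hq2 : q.coeff (m + 2) = (-1 : R) ^ (m + 4 + (m + 2)) * p.coeff (m + 2) :=
    charpoly_neg_coeff A (m + 2)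
  have hq3 : q.coeff (m + 3) = (-1 : R) ^ (m + 4 + (m + 3)) * p.coeff (m + 3) :=
    charpoly_neg_coeff A (m + 3)
  have w0 : (-1 : R) ^ (m + 4 + m) = 1 := Even.neg_one_pow ⟨m + 2, by ring⟩
  have w1 : (-1 : R) ^ (m + 4 + (m + 1)) = -1 := Odd.neg_one_pow ⟨m + 2, by ring⟩
  have w2 : (-1 : R) ^ (m + 4 + (m + 2)) = 1 := Even.neg_one_pow ⟨m + 3, by ring⟩
  have w3 : (-1 : R) ^ (m + 4 + (m + 3)) = -1 := Odd.neg_one_pow ⟨m + 3, by ring⟩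
  have htr : A.trace = -p.coeff (m + 3) := by
    have := A.trace_eq_neg_charpoly_coeff
    simpa using this
  simp only [sigmaCoeff]
  rw [htr, ← hp]
  have i2 : m + 4 - 2 = m + 2 := by omega
  have i3 : m + 4 - 3 = m + 1 := by omega
  have i4 : m + 4 - 4 = m := by omega
  rw [i2, i3, i4, hP, hsum, hq0, hq1, hq2, hq3, hqm, hpm, w0, w1, w2, w3]
  ring
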